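/- Let q be a prime power, F a finite field with q^2 elements, K a subfield of F with q elements, and α an element of F not in K. Then the map sending an ordered pair (t₁, t₂) of distinct elements of K to (t₁ − α)/(t₂ − α) is a bijection from {(t₁, t₂) ∈ K × K : t₁ ≠ t₂} onto the complement F \ K of K in F. -/

import Mathlib

/-- Let `q` be a prime power, `F` a finite field with `q^2` elements, `K` a subfield of
`F` with `q` elements, and `α ∈ F \ K`.  Then `(t₁, t₂) ↦ (t₁ − α)/(t₂ − α)` is a
bijection from `{(t₁, t₂) ∈ K × K : t₁ ≠ t₂}` onto `F \ K`. -/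
theorem bijOn_div_sub
    (q : ℕ) (hq : IsPrimePow q)
    (F : Type*) [Field F] [Fintype F]
    (hF : Fintype.card F = q ^ 2)
    (K : Subfield F) [Fintype ↥K] (hK : Fintype.card ↥K = q)
    (α : F) (hα : α ∉ K) :
    Set.BijOn (fun p : F × F => (p.1 - α) / (p.2 - α))
      {p : F × F | p.1 ∈ K ∧ p.2 ∈ K ∧ p.1 ≠ p.2}
      {x : F | x ∉ K} := by
  classical
  -- basic: t - α ≠ 0 for t ∈ K
  have hsub' : ∀ t : F, t ∈ K → t - α ≠ 0 := by
    intro t ht h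
    rw [sub_eq_zero] at h
    exact hα (h ▸ ht)
  -- key: a + b * α = 0 with a, b ∈ K forces a = b = 0
  have key : ∀ a b : F, a ∈ K → b ∈ K → a + b * α = 0 → a = 0 ∧ b = 0 := by
    intro a b ha hb h
    by_cases hb0 : b = 0
    · subst hb0; simp at h; exact ⟨h, rfl⟩
    · exfalso
      apply hα
      have : α = -a / b := by field_simp; linear_combination h
      rw [this]
      exact K.div_mem (K.neg_mem ha) hb
  have hmaps : Set.MapsTo (fun p : F × F => (p.1 - α) / (p.2 - α))
      {p : F × F | p.1 ∈ K ∧ p.2 ∈ K ∧ p.1 ≠ p.2} {x : F | x ∉ K} := by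
    rintro ⟨t₁, t₂⟩ ⟨h1, h2, hne⟩ hmem
    simp only [Set.mem_setOf_eq] at hmem
    have hd := hsub' t₂ h2
    set k := (t₁ - α) / (t₂ - α) with hk
    have hkK : k ∈ K := hmem
    have heq : t₁ - α = k * (t₂ - α) := by
      rw [hk, div_mul_cancel₀ _ hd]
    have := key (t₁ - k * t₂) (k - 1) (K.sub_mem h1 (K.mul_mem hkK h2))
      (K.sub_mem hkK K.one_mem) (by ring_nf; linear_combination heq)
    have hk1 : k = 1 := by linear_combination this.2
    apply hne
    rw [hk1, one_mul] at heq
    linear_combination heq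
  have hinj : Set.InjOn (fun p : F × F => (p.1 - α) / (p.2 - α))
      {p : F × F | p.1 ∈ K ∧ p.2 ∈ K ∧ p.1 ≠ p.2} := by
    rintro ⟨t₁, t₂⟩ ⟨ht1, ht2, htne⟩ ⟨s₁, s₂⟩ ⟨hs1, hs2, hsne⟩ h
    simp only at h
    have ht := hsub' t₂ ht2
    have hs := hsub' s₂ hs2
    have hcross : (t₁ - α) * (s₂ - α) = (s₁ - α) * (t₂ - α) := by
      field_simp at h
      linear_combination h
    have := key (t₁ * s₂ - s₁ * t₂) (s₁ + t₂ - t₁ - s₂) (K.sub_mem (K.mul_mem ht1 hs2)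
      (K.mul_mem hs1 ht2)) (K.sub_mem (K.sub_mem (K.add_mem hs1 ht2) ht1) hs2)
      (by linear_combination hcross)
    obtain ⟨h1, h2⟩ := this
    -- t₁ + s₂ = s₁ + t₂ and t₁ s₂ = s₁ t₂
    have hd : (t₁ - s₁) * (s₂ - s₁) = 0 := by linear_combination h1 + s₁ * h2
    rcases mul_eq_zero.1 hd with h' | h'
    · have e1 : t₁ = s₁ := by linear_combination h'
      have e2 : t₂ = s₂ := by linear_combination h2 + h'
      simp [e1, e2]
    · -- s₂ = s₁ ; then from equations t's equal too, contradiction with distinctness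
      exfalso
      have e : s₂ = s₁ := by linear_combination h'
      -- t₁ s₁ = s₁ t₂ and t₁ + s₁ = s₁ + t₂ ⇒ t₁ = t₂
      have : t₁ = t₂ := by linear_combination -h2 - h'
      exact htne this
  refine ⟨hmaps, hinj, ?_⟩
  -- counting
  have hdom : {p : F × F | p.1 ∈ K ∧ p.2 ∈ K ∧ p.1 ≠ p.2} = (K : Set F).offDiag := rfl
  have hfinK : (K : Set F).Finite := Set.toFinite _
  have hcard_dom : {p : F × F | p.1 ∈ K ∧ p.2 ∈ K ∧ p.1 ≠ p.2}.ncard = q * q - q := by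
    rw [hdom, Set.ncard_eq_toFinset_card _ hfinK.offDiag, hfinK.toFinset_offDiag,
      Finset.offDiag_card]
    have : (hfinK.toFinset).card = q := by
      rw [Set.Finite.card_toFinset]
      simpa using hK
    rw [this]
  have hcard_tgt : {x : F | x ∉ K}.ncard = q * q - q := by
    have : {x : F | x ∉ K} = (K : Set F)ᶜ := rfl
    rw [this, Set.ncard_eq_toFinset_card', Set.toFinset_compl,
      Finset.card_compl, Set.toFinset_card]
    simp only [Finset.card_univ, hF]
    rw [show Fintype.card (K : Set F) = q from by simpa using hK]
    ring_nf
  have himg : (fun p : F × F => (p.1 - α) / (p.2 - α)) ''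
      {p : F × F | p.1 ∈ K ∧ p.2 ∈ K ∧ p.1 ≠ p.2} ⊆ {x : F | x ∉ K} :=
    Set.image_subset_iff.2 hmaps
  have hle : {x : F | x ∉ K}.ncard ≤ ((fun p : F × F => (p.1 - α) / (p.2 - α)) ''
      {p : F × F | p.1 ∈ K ∧ p.2 ∈ K ∧ p.1 ≠ p.2}).ncard := by
    rw [Set.ncard_image_of_injOn hinj, hcard_dom, hcard_tgt]
  have heq := Set.eq_of_subset_of_ncard_le himg hle (Set.toFinite _)
  exact heq.symm.subset
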